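/- Assume f, g, h and each p_i are twice continuously differentiable. Let x* ∈ X be S-stationary with multipliers λ* ∈ ℝᵐ, μ* ∈ ℝ^q (λ* ≥ 0, λ*_i g_i(x*) = 0 for all i, and ∂L/∂x_i(x*, λ*, μ*) = 0 for every i with x*_i ≠ 0), and set y* := y(x*). Define γ* ∈ ℝⁿ by γ*_i := −(1/s_i)·∂L/∂x_i(x*, λ*, μ*) if x*_i = 0 and γ*_i := −p_i′(0)/x*_i if x*_i ≠ 0. Then the following are equivalent: (a) (SP-SONC) dᵀ∇²ₓₓL(x*, λ*, μ*) d ≥ 0 for every d ∈ C(x*, λ*); (b) for every pair (dx, dy) ∈ ℝⁿ × ℝⁿ satisfying ∇h_j(x*)ᵀdx = 0 for all j, ∇g_i(x*)ᵀdx = 0 for all i ∈ I_g(x*) with λ*_i > 0, ∇g_i(x*)ᵀdx ≤ 0 for all i ∈ I_g(x*) with λ*_i = 0, dx_i ≥ 0 for all i ∈ I₀(x*), and y*_i·dx_i + x*_i·dy_i = 0 for all i, one has dxᵀ∇²ₓₓL(x*, λ*, μ*) dx + 2·Σ_{i=1}^n γ*_i·dx_i·dy_i + Σ_{i=1}^n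 p_i″(y*_i)·dy_i² ≥ 0. -/

import Mathlib

open Filter Topology

noncomputable section

/-- Euclidean n-space. -/
abbrev E (n : ℕ) : Type := EuclideanSpace ℝ (Fin n)

/-- The SP-Lagrangian L(x, λ, μ) = f(x) + λᵀg(x) + μᵀh(x). -/
def LSP {n m q : ℕ} (f : E n → ℝ) (g : Fin m → E n → ℝ) (h : Fin q → E n → ℝ)
    (lam : Fin m → ℝ) (mu : Fin q → ℝ) (x : E n) : ℝ :=
  f x + (∑ i, lam i * g i x) + (∑ j, mu j * h j x)

/-- The quadratic form d ↦ dᵀ∇²ₓₓL(x, λ, μ)d, where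
∇²ₓₓL = ∇²f + Σᵢ λᵢ∇²gᵢ + Σⱼ μⱼ∇²hⱼ. -/
def hessQ {n m q : ℕ} (f : E n → ℝ) (g : Fin m → E n → ℝ) (h : Fin q → E n → ℝ)
    (lam : Fin m → ℝ) (mu : Fin q → ℝ) (x d : E n) : ℝ :=
  iteratedFDeriv ℝ 2 f x ![d, d] +
    (∑ i, lam i * iteratedFDeriv ℝ 2 (g i) x ![d, d]) +
    (∑ j, mu j * iteratedFDeriv ℝ 2 (h j) x ![d, d])

/-- Membership in the SP-critical cone C(x*, λ). -/
def inCritCone {n m q : ℕ} (g : Fin m → E n → ℝ) (h : Fin q → E n → ℝ)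
    (lam : Fin m → ℝ) (xstar : E n) (d : E n) : Prop :=
  (∀ j, (∑ k, gradient (h j) xstar k * d k) = 0) ∧
  (∀ i, g i xstar = 0 → 0 < lam i → (∑ k, gradient (g i) xstar k * d k) = 0) ∧
  (∀ i, g i xstar = 0 → lam i = 0 → (∑ k, gradient (g i) xstar k * d k) ≤ 0) ∧
  (∀ i, xstar i = 0 → d i = 0)

/-- A monotone function differentiable at a point has nonnegative derivative there. -/
lemma monotone_deriv_nonneg {φ : ℝ → ℝ} (hm : Monotone φ) {x : ℝ}
    (hd : DifferentiableAt ℝ φ x) : 0 ≤ deriv φ x := by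
  have h := hd.hasDerivAt
  have h1 : Filter.Tendsto (slope φ x) (𝓝[≠] x) (𝓝 (deriv φ x)) :=
    hasDerivAt_iff_tendsto_slope.mp h
  have h2 : Filter.Tendsto (slope φ x) (𝓝[>] x) (𝓝 (deriv φ x)) :=
    h1.mono_left (nhdsWithin_mono _ (fun t ht => ne_of_gt ht))
  refine ge_of_tendsto h2 ?_
  filter_upwards [self_mem_nhdsWithin] with t ht
  have hxt : x < t := ht
  have : 0 ≤ (φ t - φ x) / (t - x) :=
    div_nonneg (sub_nonneg.2 (hm hxt.le)) (sub_nonneg.2 hxt.le)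
  simpa [slope_def_field, div_eq_inv_mul] using this

/-- equivalence of SP-SONC with the second-order necessary condition
of the reformulated problem. -/
theorem stmt_8 {n m q : ℕ} (hn : 1 ≤ n) {ρ : ℝ} (hρ : 0 < ρ)
    (f : E n → ℝ) (g : Fin m → E n → ℝ) (h : Fin q → E n → ℝ)
    (hf : ContDiff ℝ 2 f) (hg : ∀ i, ContDiff ℝ 2 (g i)) (hh : ∀ j, ContDiff ℝ 2 (h j))
    (p : Fin n → ℝ → ℝ) (s : Fin n → ℝ)
    (hp : ∀ i, ContDiff ℝ 2 (p i))
    (hconv : ∀ i, ConvexOn ℝ Set.univ (p i))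
    (hspos : ∀ i, 0 < s i)
    (hmin : ∀ i t, p i (s i) ≤ p i t)
    (hstrict : ∀ i t, t ≠ s i → p i (s i) < p i t)
    (hscale : ∀ i, p i 0 - p i (s i) = ρ)
    (xstar : E n)
    -- x* ∈ X :
    (hgx : ∀ i, g i xstar ≤ 0) (hhx : ∀ j, h j xstar = 0) (hxnn : ∀ i, 0 ≤ xstar i)
    -- x* is S-stationary with multipliers λ*, μ* :
    (lam : Fin m → ℝ) (mu : Fin q → ℝ)
    (hlam : ∀ i, 0 ≤ lam i) (hcompl : ∀ i, lam i * g i xstar = 0)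
    (hstat : ∀ i, xstar i ≠ 0 → gradient (LSP f g h lam mu) xstar i = 0)
    -- y* := y(x*) :
    (ystar : E n)
    (hy : ∀ i, (xstar i = 0 → ystar i = s i) ∧ (xstar i ≠ 0 → ystar i = 0))
    -- γ* as defined in the statement:
    (γstar : Fin n → ℝ)
    (hγ : ∀ i, (xstar i = 0 →
        γstar i = -(gradient (LSP f g h lam mu) xstar i) / s i) ∧
      (xstar i ≠ 0 → γstar i = -(deriv (p i) 0) / xstar i)) :
    -- (a) SP-SONC ...
    (∀ d : E n, inCritCone g h lam xstar d → 0 ≤ hessQ f g h lam mu xstar d) ↔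
    -- ... iff (b)
    (∀ dx dy : E n,
      (∀ j, (∑ k, gradient (h j) xstar k * dx k) = 0) →
      (∀ i, g i xstar = 0 → 0 < lam i → (∑ k, gradient (g i) xstar k * dx k) = 0) →
      (∀ i, g i xstar = 0 → lam i = 0 → (∑ k, gradient (g i) xstar k * dx k) ≤ 0) →
      (∀ i, xstar i = 0 → 0 ≤ dx i) →
      (∀ i, ystar i * dx i + xstar i * dy i = 0) →
      0 ≤ hessQ f g h lam mu xstar dx + 2 * (∑ i, γstar i * dx i * dy i) +
          ∑ i, deriv (deriv (p i)) (ystar i) * (dy i) ^ 2) := by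
  -- second derivative of each p i is nonnegative everywhere
  have hdiffp : ∀ i, Differentiable ℝ (p i) := fun i => (hp i).differentiable two_ne_zero
  have hmono : ∀ i, Monotone (deriv (p i)) := by
    intro i
    have := (hconv i).monotoneOn_deriv (fun x _ => (hdiffp i).differentiableAt)
    exact monotoneOn_univ.mp this
  have hderivdiff : ∀ i, Differentiable ℝ (deriv (p i)) := by
    intro i
    have h2 : ContDiff ℝ ((1 : WithTop ℕ∞) + 1) (p i) := by
      have he : ((1 : WithTop ℕ∞) + 1) = 2 := by norm_num
      rw [he]; exact hp i
    have := (contDiff_succ_iff_deriv.mp h2).2.2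
    exact this.differentiable one_ne_zero
  have hpp : ∀ i t, 0 ≤ deriv (deriv (p i)) t := fun i t =>
    monotone_deriv_nonneg (hmono i) ((hderivdiff i) t)
  constructor
  · -- (a) → (b)
    intro ha dx dy hch hcg1 hcg2 hdxnn hlink
    -- dx_i = 0 when xstar i = 0
    have hdx0 : ∀ i, xstar i = 0 → dx i = 0 := by
      intro i hi
      have hy1 := (hy i).1 hi
      have := hlink i
      rw [hy1, hi] at this
      simp only [zero_mul, add_zero] at this
      have hs := hspos i
      rcases mul_eq_zero.mp this with h0 | h0
      · exact absurd h0 (ne_of_gt hs)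
      · exact h0
    have hdy0 : ∀ i, xstar i ≠ 0 → dy i = 0 := by
      intro i hi
      have hy2 := (hy i).2 hi
      have := hlink i
      rw [hy2] at this
      simp only [zero_mul, zero_add] at this
      rcases mul_eq_zero.mp this with h0 | h0
      · exact absurd h0 hi
      · exact h0
    have hQ : 0 ≤ hessQ f g h lam mu xstar dx :=
      ha dx ⟨hch, hcg1, hcg2, hdx0⟩
    have hcross : (∑ i, γstar i * dx i * dy i) = 0 := by
      refine Finset.sum_eq_zero fun i _ => ?_
      by_cases hi : xstar i = 0
      · rw [hdx0 i hi]; ring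
      · rw [hdy0 i hi]; ring
    have hlast : 0 ≤ ∑ i, deriv (deriv (p i)) (ystar i) * (dy i) ^ 2 := by
      refine Finset.sum_nonneg fun i _ => ?_
      exact mul_nonneg (hpp i _) (sq_nonneg _)
    rw [hcross]
    linarith
  · -- (b) → (a)
    intro hb d hd
    obtain ⟨hch, hcg1, hcg2, hd0⟩ := hd
    have := hb d 0 hch hcg1 hcg2
      (fun i hi => by rw [hd0 i hi])
      (fun i => by
        by_cases hi : xstar i = 0
        · rw [hd0 i hi]; simp
        · rw [(hy i).2 hi]; simp)
    simpa using this
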